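/- Let δ > 0 and define (p_n) by p₀ = 1+δ, p_{n+1} = 1+δ − 1/(1+δ+p_n); let ρ₀ := 1, ρ_m := 1/(1+δ+p_{m−1}) for m ≥ 1, q_n := ∏_{m=0}^n ρ_m, and Q := Σ_{n=0}^∞ q_n. There exist constants C > 0 and δ₀ ∈ (0,1) such that for all δ ∈ (0,δ₀) one has |Q − (1/2)·ln(1/δ)| ≤ C; that is, Q = |log √δ| + O(1) as δ → 0⁺. -/

import Mathlib

open Real

private noncomputable def gg (l : ℝ) (k : ℕ) : ℝ := l^k - l⁻¹^k

private lemma gg_pos (l : ℝ) (hl : 1 < l) (k : ℕ) : 0 < gg l (k+1) := by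
  have h0 : 0 < l := lt_trans one_pos hl
  have h1 : l⁻¹ < 1 := inv_lt_one_of_one_lt₀ hl
  have h2 : l⁻¹^(k+1) < 1 := pow_lt_one₀ (by positivity) h1 (Nat.succ_ne_zero k)
  have h3 : 1 < l^(k+1) := one_lt_pow₀ hl (Nat.succ_ne_zero k)
  simp only [gg]; linarith

private lemma gg_rec (l : ℝ) (hl : 1 < l) (k : ℕ) :
    gg l (k+2) = (l + l⁻¹) * gg l (k+1) - gg l k := by
  have hll : l * l⁻¹ = 1 := mul_inv_cancel₀ (by linarith)
  simp only [gg]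
  linear_combination (l⁻¹^k - l^k) * hll

private lemma gg_step_lower (l : ℝ) (hl : 1 < l) (k : ℕ) :
    gg l k + gg l 1 ≤ gg l (k+1) := by
  have h0 : 0 < l := lt_trans one_pos hl
  have hy0 : 0 < l⁻¹ := by positivity
  have hll : l * l⁻¹ = 1 := mul_inv_cancel₀ (by linarith)
  have hk : 1 ≤ l^k := one_le_pow₀ hl.le
  have hyk : l⁻¹^k ≤ 1 := pow_le_one₀ hy0.le (inv_lt_one_of_one_lt₀ hl).le
  have hprod : l^k * l⁻¹^k = 1 := by rw [← mul_pow, hll, one_pow]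
  simp only [gg, pow_succ, pow_one]
  nlinarith [sq_nonneg (l - 1), sq_nonneg (l^k - 1),
    mul_nonneg (sub_nonneg.mpr hk) (sub_nonneg.mpr hyk),
    mul_nonneg (mul_nonneg (sub_nonneg.mpr hk) (sub_nonneg.mpr hyk)) hy0.le,
    mul_nonneg (sub_nonneg.mpr hk) (sub_nonneg.mpr hl.le)]

private lemma gg_linear (l : ℝ) (hl : 1 < l) (k : ℕ) : (k:ℝ) * gg l 1 ≤ gg l k := by
  induction k with
  | zero => simp [gg]
  | succ k ih =>
    have := gg_step_lower l hl k
    push_cast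
    linarith

private lemma gg_pow_le (l : ℝ) (hl : 1 < l) (n : ℕ) : l^n * gg l 1 ≤ gg l (n+1) := by
  have h0 : 0 < l := lt_trans one_pos hl
  have hy0 : 0 < l⁻¹ := by positivity
  have hyk : l⁻¹^n ≤ 1 := pow_le_one₀ hy0.le (inv_lt_one_of_one_lt₀ hl).le
  have hk : 1 ≤ l^n := one_le_pow₀ hl.le
  simp only [gg, pow_succ, pow_one]
  nlinarith [mul_le_mul_of_nonneg_right (le_trans hyk hk) hy0.le]

private lemma gg_step_upper (l : ℝ) (hl : 1 < l) (k : ℕ) :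
    gg l (k+1) ≤ gg l k + gg l 1 * l^k := by
  have h0 : 0 < l := lt_trans one_pos hl
  have hy0 : 0 < l⁻¹ := by positivity
  have hyk : l⁻¹^k ≤ l^k := le_trans (pow_le_one₀ hy0.le (inv_lt_one_of_one_lt₀ hl).le) (one_le_pow₀ hl.le)
  have hy1 : l⁻¹ < 1 := inv_lt_one_of_one_lt₀ hl
  simp only [gg, pow_succ, pow_one]
  nlinarith [mul_le_mul_of_nonneg_right hyk (by linarith : (0:ℝ) ≤ 1 - l⁻¹)]

private lemma pow_le_lin (l : ℝ) (hl : 1 < l) (k : ℕ) (h2 : l^k ≤ 2) :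
    l^k ≤ 1 + 2*k*(l-1) := by
  have hgs := geom_sum_mul l k
  have hS : (∑ i ∈ Finset.range k, l ^ i) ≤ 2*k := by
    calc (∑ i ∈ Finset.range k, l ^ i) ≤ ∑ i ∈ Finset.range k, (2:ℝ) := by
          apply Finset.sum_le_sum
          intro i hi
          exact le_trans (pow_le_pow_right₀ hl.le (Finset.mem_range.mp hi).le) h2
      _ = 2*k := by simp [mul_comm]
  nlinarith [hS, sub_pos.mpr hl]

private lemma gg_upper (l : ℝ) (hl : 1 < l) (n : ℕ) (h2 : l^n ≤ 2) :
    gg l (n+1) ≤ gg l 1 * ((n+1) * (1 + (l-1)*n)) := by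
  induction n with
  | zero => simp
  | succ n ih =>
    have hmono : l^n ≤ l^(n+1) := pow_le_pow_right₀ hl.le (Nat.le_succ n)
    have h2' : l^n ≤ 2 := le_trans hmono h2
    have hstep := gg_step_upper l hl (n+1)
    have hlin := pow_le_lin l hl (n+1) h2
    have hg1 : 0 < gg l 1 := gg_pos l hl 0
    have ihh := ih h2'
    push_cast
    push_cast at ihh hlin
    nlinarith [mul_le_mul_of_nonneg_left hlin hg1.le]

private lemma harm_lower (N : ℕ) :
    Real.log (N + 1) ≤ ∑ n ∈ Finset.range N, (1:ℝ)/(n+1) := by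
  induction N with
  | zero => simp
  | succ N ih =>
    rw [Finset.sum_range_succ]
    have key := Real.log_le_sub_one_of_pos (show (0:ℝ) < ((N:ℝ)+1+1)/((N:ℝ)+1) by positivity)
    rw [Real.log_div (by positivity) (by positivity)] at key
    have h2 : ((N:ℝ)+1+1)/((N:ℝ)+1) - 1 = 1/((N:ℝ)+1) := by field_simp; ring
    push_cast
    push_cast at ih
    linarith [h2 ▸ key]

private lemma harm_upper (N : ℕ) (hN : 1 ≤ N) :
    ∑ n ∈ Finset.range N, (1:ℝ)/(n+1) ≤ 1 + Real.log N := by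
  induction N with
  | zero => omega
  | succ N ih =>
    rcases Nat.lt_or_ge 1 (N+1) with h1 | h1
    · have hN' : 1 ≤ N := by omega
      have hNp : (0:ℝ) < N := by exact_mod_cast Nat.pos_of_ne_zero (by omega)
      rw [Finset.sum_range_succ]
      have key := Real.log_le_sub_one_of_pos (show (0:ℝ) < (N:ℝ)/((N:ℝ)+1) by positivity)
      rw [Real.log_div (by positivity) (by positivity)] at key
      have h2 : (N:ℝ)/((N:ℝ)+1) - 1 = -(1/((N:ℝ)+1)) := by field_simp; ring
      have ihh := ih hN'
      push_cast
      push_cast at ihh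
      linarith [h2 ▸ key]
    · have : N = 0 := by omega
      subst this
      simp
set_option maxHeartbeats 1000000 in
theorem stmt_10 :
    ∃ C > (0:ℝ), ∃ δ₀ ∈ Set.Ioo (0:ℝ) 1, ∀ δ ∈ Set.Ioo (0:ℝ) δ₀,
      ∀ p ρ q : ℕ → ℝ,
        p 0 = 1 + δ →
        (∀ n, p (n + 1) = 1 + δ - 1 / (1 + δ + p n)) →
        ρ 0 = 1 →
        (∀ m, 1 ≤ m → ρ m = 1 / (1 + δ + p (m - 1))) →
        (∀ n, q n = ∏ m ∈ Finset.range (n + 1), ρ m) →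
        Summable q ∧ |(∑' n, q n) - (1/2) * Real.log (1/δ)| ≤ C := by
  refine ⟨6, by norm_num, 1/100, by norm_num, ?_⟩
  rintro δ ⟨hδ0, hδ1⟩ p ρ q hp0 hprec hρ0 hρm hq
  -- square root facts
  set s := Real.sqrt (δ^2 + 2*δ) with hs_def
  have hs0 : 0 < s := Real.sqrt_pos.mpr (by linarith only [hδ0, sq_nonneg δ])
  have hs_sq : s^2 = δ^2 + 2*δ := Real.sq_sqrt (by linarith only [hδ0, sq_nonneg δ])
  have hsqd0 : 0 < Real.sqrt δ := Real.sqrt_pos.mpr hδ0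
  have hsqd_sq : (Real.sqrt δ)^2 = δ := Real.sq_sqrt hδ0.le
  have hsqd1 : Real.sqrt δ ≤ 1/10 := by
    have h1 : Real.sqrt δ ≤ Real.sqrt (1/100) := Real.sqrt_le_sqrt hδ1.le
    have h2 : Real.sqrt (1/100) = 1/10 := by
      rw [show (1/100:ℝ) = (1/10)^2 by norm_num, Real.sqrt_sq (by norm_num)]
    rwa [h2] at h1
  have hδ2 : δ^2 ≤ δ := by
    have h1 : δ*δ ≤ 1*δ :=
      mul_le_mul_of_nonneg_right (by linarith only [hδ1] : δ ≤ 1) hδ0.le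
    calc δ^2 = δ*δ := sq δ
      _ ≤ 1*δ := h1
      _ = δ := one_mul δ
  have hsd : Real.sqrt δ ≤ s := Real.sqrt_le_sqrt (by linarith only [hδ0, sq_nonneg δ])
  have hsu : s ≤ 2 * Real.sqrt δ := by
    have h1 : s ≤ Real.sqrt (4*δ) := Real.sqrt_le_sqrt (by linarith only [hδ2, hδ0])
    have h2 : Real.sqrt (4*δ) = 2 * Real.sqrt δ := by
      rw [show (4:ℝ)*δ = 2^2*δ by ring, Real.sqrt_mul (by positivity) δ,
        Real.sqrt_sq (by norm_num)]
    rwa [h2] at h1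
  have hδs2 : δ ≤ Real.sqrt δ / 2 := by
    have h1 : Real.sqrt δ * Real.sqrt δ ≤ Real.sqrt δ * (1/2) :=
      mul_le_mul_of_nonneg_left (by linarith only [hsqd1] : Real.sqrt δ ≤ 1/2) hsqd0.le
    calc δ = Real.sqrt δ * Real.sqrt δ := (Real.mul_self_sqrt hδ0.le).symm
      _ ≤ Real.sqrt δ * (1/2) := h1
      _ = Real.sqrt δ / 2 := by ring
  have hδs : δ ≤ Real.sqrt δ := by linarith only [hδs2, hsqd0]
  -- lambda
  set l := 1 + δ + s with hl_def
  have hl1 : 1 < l := by simp only [hl_def]; linarith only [hδ0, hs0]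
  have hl0 : 0 < l := lt_trans one_pos hl1
  have hl2 : l ≤ 2 := by simp only [hl_def]; linarith only [hδ1, hsu, hsqd1]
  have hlinv : l⁻¹ = 1 + δ - s := by
    apply inv_eq_of_mul_eq_one_right
    simp only [hl_def]
    linear_combination (-1:ℝ) * hs_sq
  have hll : l * l⁻¹ = 1 := mul_inv_cancel₀ hl0.ne'
  have hy0 : 0 < l⁻¹ := by positivity
  have hy1 : l⁻¹ < 1 := inv_lt_one_of_one_lt₀ hl1
  have hsum_li : l + l⁻¹ = 2 + 2*δ := by rw [hlinv]; simp only [hl_def]; ring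
  have hlm1_low : Real.sqrt δ ≤ l - 1 := by simp only [hl_def]; linarith only [hδ0, hsd]
  have hlm1_up : l - 1 ≤ 3 * Real.sqrt δ := by
    simp only [hl_def]; linarith only [hδs, hsu]
  clear_value s l
  -- closed form for p
  have hpg : ∀ n, 1 + δ + p n = gg l (n+2) / gg l (n+1) := by
    intro n
    induction n with
    | zero =>
      rw [hp0]
      rw [eq_div_iff (gg_pos l hl1 0).ne']
      show (1 + δ + (1+δ)) * (gg l 1) = gg l 2
      simp only [gg]
      linear_combination (l⁻¹ - l) * hsum_li
    | succ n ih =>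
      have h1 : (0:ℝ) < gg l (n+1) := gg_pos l hl1 n
      have h2 : (0:ℝ) < gg l (n+2) := gg_pos l hl1 (n+1)
      have hr : gg l (n+3) = (l + l⁻¹) * gg l (n+2) - gg l (n+1) := gg_rec l hl1 (n+1)
      rw [hprec n, ih, one_div_div]
      show 1 + δ + (1 + δ - gg l (n+1) / gg l (n+2)) = gg l (n+3) / gg l (n+2)
      rw [eq_div_iff h2.ne']
      field_simp
      linear_combination (-1 : ℝ) * hr - gg l (n+2) * hsum_li
  -- closed form for q
  have hq' : ∀ n, q n = gg l 1 / gg l (n+1) := by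
    intro n
    induction n with
    | zero =>
      rw [hq 0]
      simp [hρ0, div_self (gg_pos l hl1 0).ne']
    | succ n ih =>
      have h1 : (0:ℝ) < gg l (n+1) := gg_pos l hl1 n
      have h2 : (0:ℝ) < gg l (n+2) := gg_pos l hl1 (n+1)
      have hx : q (n+1) = q n * ρ (n+1) := by
        rw [hq (n+1), hq n, Finset.prod_range_succ]
      have hρval : ρ (n+1) = gg l (n+1) / gg l (n+2) := by
        rw [hρm (n+1) (Nat.le_add_left 1 n)]
        simp only [Nat.add_sub_cancel]
        rw [hpg n, one_div_div]
      rw [hx, ih, hρval]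
      field_simp
  -- positivity and bounds for q
  have hqpos : ∀ n, 0 < q n := by
    intro n
    rw [hq' n]
    exact div_pos (gg_pos l hl1 0) (gg_pos l hl1 n)
  have hq_le : ∀ n : ℕ, q n ≤ 1/(n+1) := by
    intro n
    rw [hq' n]
    have h2 : (0:ℝ) < gg l (n+1) := gg_pos l hl1 n
    have h3 := gg_linear l hl1 (n+1)
    push_cast at h3
    rw [div_le_div_iff₀ h2 (by positivity)]
    linarith only [h3]
  have hq_geo : ∀ n : ℕ, q n ≤ l⁻¹^n := by
    intro n
    rw [hq' n]
    have h3 := gg_pow_le l hl1 n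
    have h1 : (0:ℝ) < gg l 1 := gg_pos l hl1 0
    have h6 : (0:ℝ) < l^n * gg l 1 := mul_pos (pow_pos hl0 n) h1
    have h5 : (l^n)⁻¹ = gg l 1 / (l^n * gg l 1) := by field_simp
    rw [inv_pow, h5]
    gcongr
  have hsumq : Summable q := Summable.of_nonneg_of_le (fun n => (hqpos n).le) hq_geo
    (summable_geometric_of_lt_one hy0.le hy1)
  refine ⟨hsumq, ?_⟩
  -- the cutoff N
  have hlogl : 0 < Real.log l := Real.log_pos hl1
  set N := Nat.floor (Real.log 2 / Real.log l) with hN_def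
  have hNle : (N:ℝ) ≤ Real.log 2 / Real.log l := Nat.floor_le (by positivity)
  have hNgt : Real.log 2 / Real.log l < N + 1 := Nat.lt_floor_add_one _
  have hN1 : 1 ≤ N := by
    rw [hN_def]
    apply Nat.le_floor
    rw [Nat.cast_one, le_div_iff₀ hlogl, one_mul]
    exact Real.log_le_log hl0 hl2
  have hNpos : (0:ℝ) < N := by exact_mod_cast Nat.pos_of_ne_zero (by omega)
  have hpowN : l^N ≤ 2 := by
    have h1 : (N:ℝ) * Real.log l ≤ Real.log 2 := by
      rw [← le_div_iff₀ hlogl]; exact hNle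
    have h2 : Real.log (l^N) ≤ Real.log 2 := by rw [Real.log_pow]; exact_mod_cast h1
    have h3 := Real.exp_le_exp.mpr h2
    rwa [Real.exp_log (by positivity), Real.exp_log (by norm_num)] at h3
  have hpowN1 : 2 ≤ l^(N+1) := by
    have h1 : Real.log 2 ≤ ((N:ℝ)+1) * Real.log l := by
      rw [← div_le_iff₀ hlogl]; exact hNgt.le
    have h2 : Real.log 2 ≤ Real.log (l^(N+1)) := by
      rw [Real.log_pow]; push_cast; linarith only [h1]
    have h3 := Real.exp_le_exp.mpr h2
    rwa [Real.exp_log (by norm_num), Real.exp_log (by positivity)] at h3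
  have hNu : (N:ℝ) * (l-1) ≤ 1 := by
    have h1 := one_add_mul_le_pow (show (-2:ℝ) ≤ l - 1 by linarith only [hl0]) N
    rw [show (1:ℝ) + (l-1) = l by ring] at h1
    linarith only [h1, hpowN]
  -- bounds on N via sqrt δ
  have hlogl_low : Real.sqrt δ / 2 ≤ Real.log l := by
    have h1 := Real.log_le_sub_one_of_pos hy0
    rw [Real.log_inv] at h1
    have h2 : l⁻¹ - 1 = δ - s := by rw [hlinv]; ring
    rw [h2] at h1
    linarith only [h1, hsd, hδs2]
  have hlogl_up : Real.log l ≤ 3 * Real.sqrt δ :=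
    le_trans (Real.log_le_sub_one_of_pos hl0) hlm1_up
  have hlog2le1 : Real.log 2 ≤ 1 := by linarith only [Real.log_two_lt_d9]
  have hNup : (N:ℝ) ≤ 2 / Real.sqrt δ := by
    have h1 : Real.log 2 / Real.log l ≤ 2 / Real.sqrt δ := by
      rw [div_le_div_iff₀ hlogl hsqd0]
      have h2 : Real.log 2 * Real.sqrt δ ≤ 1 * Real.sqrt δ :=
        mul_le_mul_of_nonneg_right hlog2le1 hsqd0.le
      linarith only [h2, hlogl_low]
    linarith only [h1, hNle]
  have hNlow : 1 / (10 * Real.sqrt δ) ≤ (N:ℝ) := by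
    have h2 : Real.log 2 < ((N:ℝ)+1) * Real.log l := by
      rwa [div_lt_iff₀ hlogl] at hNgt
    have h3 : ((N:ℝ)+1) * Real.log l ≤ ((N:ℝ)+1) * (3*Real.sqrt δ) :=
      mul_le_mul_of_nonneg_left hlogl_up (by positivity)
    rw [div_le_iff₀ (by positivity)]
    linarith only [h2, h3, Real.log_two_gt_d9, hsqd1, hNpos, mul_le_mul_of_nonneg_left hsqd1 hNpos.le]
  -- log N bounds
  have hlogsq : Real.log (Real.sqrt δ) = Real.log δ / 2 := Real.log_sqrt hδ0.le
  have hlogN_up : Real.log N ≤ Real.log 2 - Real.log δ / 2 := by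
    have h1 := Real.log_le_log hNpos hNup
    rwa [Real.log_div (by norm_num) hsqd0.ne', hlogsq] at h1
  have hlog10 : Real.log 10 ≤ 3 := by
    have h2 : Real.exp 1 ^ (3:ℕ) = Real.exp 3 := by
      rw [← Real.exp_nat_mul]; norm_num
    have h3 : (2.7182818283:ℝ)^(3:ℕ) ≤ (Real.exp 1)^(3:ℕ) :=
      pow_le_pow_left₀ (by norm_num) Real.exp_one_gt_d9.le 3
    have h1 : (10:ℝ) ≤ Real.exp 3 := by
      rw [← h2]
      calc (10:ℝ) ≤ (2.7182818283:ℝ)^(3:ℕ) := by norm_num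
        _ ≤ (Real.exp 1)^(3:ℕ) := h3
    calc Real.log 10 ≤ Real.log (Real.exp 3) := Real.log_le_log (by norm_num) h1
      _ = 3 := Real.log_exp 3
  have hlogN_low : - Real.log 10 - Real.log δ / 2 ≤ Real.log N := by
    have h0 : (0:ℝ) < 1/(10*Real.sqrt δ) := by positivity
    have h1 := Real.log_le_log h0 hNlow
    rwa [one_div, Real.log_inv, Real.log_mul (by norm_num) hsqd0.ne', hlogsq, neg_add] at h1
  -- head sums
  have hhead_up : ∑ n ∈ Finset.range N, q n ≤ ∑ n ∈ Finset.range N, (1:ℝ)/(n+1) :=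
    Finset.sum_le_sum (fun n _ => hq_le n)
  have hharm_up := harm_upper N hN1
  have hharm_low := harm_lower N
  -- tail bound
  have htail_le : (∑' n : ℕ, q (n + N)) ≤ 4 := by
    have hterm : ∀ n : ℕ, q (n + N) ≤ (2 * gg l 1 * l⁻¹^(N+1)) * l⁻¹^n := by
      intro n
      have hpow : 2 ≤ l^(n+N+1) := le_trans hpowN1 (pow_le_pow_right₀ hl1.le (by omega))
      have h2 : (0:ℝ) < gg l (n+N+1) := gg_pos l hl1 (n+N)
      have hpw : (0:ℝ) < l^(n+N+1) := by positivity
      have h3 : l^(n+N+1)/2 ≤ gg l (n+N+1) := by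
        have hyy : l⁻¹^(n+N+1) ≤ 1 := pow_le_one₀ hy0.le hy1.le
        simp only [gg]
        linarith only [hyy, hpow]
      have h4 : q (n+N) ≤ gg l 1 / (l^(n+N+1)/2) := by
        rw [hq' (n+N)]
        gcongr
        exact (gg_pos l hl1 0).le
      calc q (n+N) ≤ gg l 1 / (l^(n+N+1)/2) := h4
        _ = (2 * gg l 1 * l⁻¹^(N+1)) * l⁻¹^n := by
            rw [inv_pow, inv_pow, show n+N+1 = (N+1)+n by omega, pow_add]
            have hpw1 : (0:ℝ) < l^(N+1) := by positivity
            have hpw2 : (0:ℝ) < l^n := by positivity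
            field_simp
    have hgeo : Summable (fun n : ℕ => (2 * gg l 1 * l⁻¹^(N+1)) * l⁻¹^n) :=
      (summable_geometric_of_lt_one hy0.le hy1).mul_left _
    have hshift : Summable (fun n : ℕ => q (n + N)) := (summable_nat_add_iff N).mpr hsumq
    have hyN : l⁻¹^(N+1) ≤ 1/2 := by
      rw [inv_pow]
      calc (l^(N+1))⁻¹ ≤ (2:ℝ)⁻¹ := inv_anti₀ (by norm_num) hpowN1
        _ = 1/2 := by norm_num
    calc (∑' n : ℕ, q (n + N)) ≤ ∑' n : ℕ, (2 * gg l 1 * l⁻¹^(N+1)) * l⁻¹^n :=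
          Summable.tsum_le_tsum hterm hshift hgeo
      _ = (2 * gg l 1 * l⁻¹^(N+1)) * (1 - l⁻¹)⁻¹ := by
          rw [tsum_mul_left, tsum_geometric_of_lt_one hy0.le hy1]
      _ ≤ 4 := by
          have hkey : gg l 1 = (l+1)*(1-l⁻¹) := by
            simp only [gg, pow_one]; linear_combination hll
          have h1y : (0:ℝ) < 1 - l⁻¹ := by linarith only [hy1]
          have hform : (2 * gg l 1 * l⁻¹^(N+1)) * (1 - l⁻¹)⁻¹ = 2*((l+1)*l⁻¹^(N+1)) := by
            rw [hkey]
            have hc : (1 - l⁻¹) * (1 - l⁻¹)⁻¹ = 1 := mul_inv_cancel₀ h1y.ne'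
            linear_combination (2*(l+1)*l⁻¹^(N+1)) * hc
          rw [hform]
          have hp0' : (0:ℝ) < l⁻¹^(N+1) := pow_pos hy0 (N+1)
          have h31 : (l+1) * l⁻¹^(N+1) ≤ 3 * (1/2) :=
            mul_le_mul (by linarith only [hl2]) hyN hp0'.le (by norm_num)
          linarith only [h31]
  -- lower bound on head terms
  have hhead_low : ∑ n ∈ Finset.range N, ((1:ℝ)/(n+1) - (l-1)) ≤ ∑ n ∈ Finset.range N, q n := by
    apply Finset.sum_le_sum
    intro n hn
    have hnN : n < N := Finset.mem_range.mp hn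
    have hp2 : l^n ≤ 2 := le_trans (pow_le_pow_right₀ hl1.le hnN.le) hpowN
    have hgu := gg_upper l hl1 n hp2
    have h1 : (0:ℝ) < gg l 1 := gg_pos l hl1 0
    have h2 : (0:ℝ) < gg l (n+1) := gg_pos l hl1 n
    have hu0 : (0:ℝ) < l - 1 := by linarith only [hl1]
    have hn0 : (0:ℝ) ≤ (n:ℝ) := n.cast_nonneg
    have hA : (0:ℝ) < (n:ℝ)+1 := by positivity
    have h1n : (0:ℝ) < 1 + (l-1)*(n:ℝ) := by positivity
    have hd : (0:ℝ) < ((n:ℝ)+1) * (1 + (l-1)*(n:ℝ)) := by positivity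
    have hq_ge : 1/(((n:ℝ)+1) * (1 + (l-1)*(n:ℝ))) ≤ q n := by
      rw [hq' n, div_le_div_iff₀ hd h2, one_mul]
      push_cast at hgu
      linarith only [hgu]
    have key : (1 - (l-1)*((n:ℝ)+1)) * (1 + (l-1)*(n:ℝ)) ≤ 1 := by
      have ha : (0:ℝ) ≤ (l-1)*(l-1)*((n:ℝ)*(n:ℝ)) :=
        mul_nonneg (mul_nonneg hu0.le hu0.le) (mul_nonneg hn0 hn0)
      have hb : (0:ℝ) ≤ (l-1)*(l-1)*(n:ℝ) := mul_nonneg (mul_nonneg hu0.le hu0.le) hn0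
      linarith only [ha, hb, hu0]
    have hstep : 1/((n:ℝ)+1) - (l-1) ≤ 1/(((n:ℝ)+1) * (1 + (l-1)*(n:ℝ))) := by
      have heq : 1/((n:ℝ)+1) - (l-1) = (1 - (l-1)*((n:ℝ)+1))/((n:ℝ)+1) := by
        field_simp
      rw [heq, div_le_div_iff₀ hA hd]
      calc (1 - (l-1)*((n:ℝ)+1)) * (((n:ℝ)+1) * (1 + (l-1)*(n:ℝ)))
          = ((1 - (l-1)*((n:ℝ)+1)) * (1 + (l-1)*(n:ℝ))) * ((n:ℝ)+1) := by ring
        _ ≤ 1 * ((n:ℝ)+1) := mul_le_mul_of_nonneg_right key hA.le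
    linarith only [hstep, hq_ge]
  have hsum_split : ∑ n ∈ Finset.range N, ((1:ℝ)/(n+1) - (l-1))
      = (∑ n ∈ Finset.range N, (1:ℝ)/(n+1)) - N*(l-1) := by
    rw [Finset.sum_sub_distrib, Finset.sum_const, Finset.card_range]
    push_cast; ring
  have hle_tsum : ∑ n ∈ Finset.range N, q n ≤ ∑' n, q n :=
    Summable.sum_le_tsum _ (fun i _ => (hqpos i).le) hsumq
  have hsplit := Summable.sum_add_tsum_nat_add N hsumq
  -- final bounds
  have hQup : (∑' n, q n) ≤ 5 + Real.log N := by
    rw [← hsplit]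
    linarith only [hhead_up, hharm_up, htail_le]
  have hQlow : Real.log ((N:ℝ)+1) - 2 ≤ ∑' n, q n := by
    push_cast at hharm_low
    linarith only [hhead_low, hsum_split, hle_tsum, hharm_low, hNu]
  have hmono : Real.log N ≤ Real.log ((N:ℝ)+1) := Real.log_le_log hNpos (by linarith only [hNpos])
  have hLr : (1/2:ℝ) * Real.log (1/δ) = - Real.log δ / 2 := by
    rw [show (1/δ) = δ⁻¹ from one_div δ, Real.log_inv]; ring
  rw [abs_le, hLr]
  constructor
  · linarith only [hQlow, hmono, hlogN_low, hlog10]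
  · linarith only [hQup, hlogN_up, hlog2le1]
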